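/- Let l be a prime, let Γ₀(l) ⊂ SL₂(ℤ_l) be the subgroup of matrices that are upper triangular modulo l, and let g = diag(l, 1) ∈ GL₂(ℚ_l), so that conjugation by g⁻¹ maps Γ₀(l) into SL₂(ℤ_l). Then there is no finite-index subgroup Γ' ⊂ Γ₀(l) that is normal in SL₂(ℤ_l) under both embeddings of Γ₀(l) into SL₂(ℤ_l): the standard inclusion and the embedding given by conjugation by g. -/

import Mathlib

/-!
STATEMENT 16. Let `l` be a prime, `Γ₀(l) ⊂ SL₂(ℤ_l)` the subgroup of matrices that are
upper triangular modulo `l` (i.e. whose lower-left entry is divisible by `l`), and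
`g = diag(l, 1) ∈ GL₂(ℚ_l)`, so that conjugation by `g` maps `Γ₀(l)` into `SL₂(ℤ_l)`.
Then there is no finite-index subgroup `Γ' ⊂ Γ₀(l)` that is normal in `SL₂(ℤ_l)` under
both embeddings of `Γ₀(l)` into `SL₂(ℤ_l)`: the standard inclusion and the embedding
given by conjugation by `g`.
-/

open Matrix

variable (l : ℕ) [Fact l.Prime]

/-- `Γ₀(l) ⊂ SL₂(ℤ_l)`: the subgroup of matrices which are upper triangular modulo `l`,
that is, the preimage under reduction mod `l` of the standard Borel of `SL₂(𝔽_l)`. -/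
def Gamma0Zl : Subgroup (Matrix.SpecialLinearGroup (Fin 2) ℤ_[l]) where
  carrier := {A | (l : ℤ_[l]) ∣ (A : Matrix (Fin 2) (Fin 2) ℤ_[l]) 1 0}
  one_mem' := by
    simp
  mul_mem' := by
    intro A B hA hB
    simp only [Set.mem_setOf_eq, Matrix.SpecialLinearGroup.coe_mul] at *
    rw [Matrix.mul_apply, Fin.sum_univ_two]
    exact dvd_add (Dvd.dvd.mul_right hA _) (Dvd.dvd.mul_left hB _)
  inv_mem' := by
    intro A hA
    simp only [Set.mem_setOf_eq] at *
    rw [Matrix.SpecialLinearGroup.SL2_inv_expl]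
    simpa using hA.neg_right

/-- The element `g = diag(l, 1)` of `GL₂(ℚ_l)`. -/
noncomputable def diagL : GL (Fin 2) ℚ_[l] :=
  ⟨!![(l : ℚ_[l]), 0; 0, 1], !![(l : ℚ_[l])⁻¹, 0; 0, 1],
    by
      have hl : (l : ℚ_[l]) ≠ 0 :=
        Nat.cast_ne_zero.mpr (Fact.out : l.Prime).ne_zero
      rw [Matrix.mul_fin_two]
      simp [mul_inv_cancel₀ hl, Matrix.one_fin_two],
    by
      have hl : (l : ℚ_[l]) ≠ 0 :=
        Nat.cast_ne_zero.mpr (Fact.out : l.Prime).ne_zero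
      rw [Matrix.mul_fin_two]
      simp [inv_mul_cancel₀ hl, Matrix.one_fin_two]⟩

/-- The natural embedding `SL₂(ℤ_l) → GL₂(ℚ_l)`. -/
noncomputable def slZlToGlQl : Matrix.SpecialLinearGroup (Fin 2) ℤ_[l] →* GL (Fin 2) ℚ_[l] :=
  Matrix.SpecialLinearGroup.toGL.comp
    (Matrix.SpecialLinearGroup.map (PadicInt.Coe.ringHom (p := l)))

/-! ### Auxiliary definitions and lemmas -/

namespace Stmt16Aux

/-- Upper unipotent matrix. -/
noncomputable def U (m : ℤ_[l]) : Matrix.SpecialLinearGroup (Fin 2) ℤ_[l] :=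
  ⟨!![1, m; 0, 1], by simp [Matrix.det_fin_two_of]⟩

/-- Lower unipotent matrix. -/
noncomputable def L (m : ℤ_[l]) : Matrix.SpecialLinearGroup (Fin 2) ℤ_[l] :=
  ⟨!![1, 0; m, 1], by simp [Matrix.det_fin_two_of]⟩

/-- The Weyl element. -/
noncomputable def w : Matrix.SpecialLinearGroup (Fin 2) ℤ_[l] :=
  ⟨!![0, -1; 1, 0], by simp [Matrix.det_fin_two_of]⟩

lemma U_mul (a b : ℤ_[l]) : U l a * U l b = U l (a + b) := by
  apply Matrix.SpecialLinearGroup.ext; intro i j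
  rw [Matrix.SpecialLinearGroup.coe_mul]
  fin_cases i <;> fin_cases j <;>
    simp [U, Matrix.mul_apply, Fin.sum_univ_two, add_comm]

lemma w_mul_U (m : ℤ_[l]) : w l * U l m = L l (-m) * w l := by
  apply Matrix.SpecialLinearGroup.ext; intro i j
  rw [Matrix.SpecialLinearGroup.coe_mul, Matrix.SpecialLinearGroup.coe_mul]
  fin_cases i <;> fin_cases j <;>
    simp [w, U, L, Matrix.mul_apply, Fin.sum_univ_two]

lemma w_mul_L (m : ℤ_[l]) : w l * L l m = U l (-m) * w l := by
  apply Matrix.SpecialLinearGroup.ext; intro i j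
  rw [Matrix.SpecialLinearGroup.coe_mul, Matrix.SpecialLinearGroup.coe_mul]
  fin_cases i <;> fin_cases j <;>
    simp [w, U, L, Matrix.mul_apply, Fin.sum_univ_two]

lemma w_conj_U (m : ℤ_[l]) : w l * U l m * (w l)⁻¹ = L l (-m) := by
  rw [w_mul_U, mul_inv_cancel_right]

lemma w_conj_L (m : ℤ_[l]) : w l * L l m * (w l)⁻¹ = U l (-m) := by
  rw [w_mul_L, mul_inv_cancel_right]

lemma U_zero : U l 0 = 1 := by
  apply Subtype.ext
  rw [Matrix.SpecialLinearGroup.coe_one, Matrix.one_fin_two]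
  rfl

lemma U_pow (n : ℕ) : U l 1 ^ n = U l (n : ℤ_[l]) := by
  induction n with
  | zero => rw [pow_zero, Nat.cast_zero, U_zero]
  | succ n ih => rw [pow_succ, ih, U_mul]; push_cast; ring_nf

lemma hl0 : (l : ℚ_[l]) ≠ 0 := Nat.cast_ne_zero.mpr (Fact.out : l.Prime).ne_zero

lemma map2 (f : ℤ_[l] → ℚ_[l]) (a b c d : ℤ_[l]) :
    (!![a, b; c, d]).map f = !![f a, f b; f c, f d] := by
  ext i j; fin_cases i <;> fin_cases j <;> simp

lemma phi_inj : Function.Injective (slZlToGlQl l) := by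
  intro x y h
  have h1 := congrArg Units.val h
  ext i j
  have h2 := congrFun (congrFun h1 i) j
  exact Subtype.coe_injective h2

lemma conj_phi_L (m : ℤ_[l]) :
    MulAut.conj (diagL l) (slZlToGlQl l (L l ((l : ℤ_[l]) * m))) = slZlToGlQl l (L l m) := by
  apply Units.ext
  show (diagL l).val * ((!![1, 0; (l : ℤ_[l]) * m, 1] : Matrix (Fin 2) (Fin 2) ℤ_[l]).map (↑))
      * ((diagL l)⁻¹).val
      = (!![1, 0; m, 1] : Matrix (Fin 2) (Fin 2) ℤ_[l]).map (↑)
  have hl : (l : ℚ_[l]) ≠ 0 := hl0 l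
  show !![(l : ℚ_[l]), 0; 0, 1] * _ * !![(l : ℚ_[l])⁻¹, 0; 0, 1] = _
  rw [map2 l Subtype.val, map2 l Subtype.val, Matrix.mul_fin_two, Matrix.mul_fin_two]
  push_cast
  ext i j
  fin_cases i <;> fin_cases j <;> simp <;> field_simp

lemma extract (x : Matrix.SpecialLinearGroup (Fin 2) ℤ_[l]) (m₁ : ℤ_[l])
    (h : MulAut.conj (diagL l) (slZlToGlQl l x) = slZlToGlQl l (U l m₁)) :
    ∃ m₂, m₁ = (l : ℤ_[l]) * m₂ ∧ x = U l m₂ := by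
  have hl : (l : ℚ_[l]) ≠ 0 := hl0 l
  set A := (x : Matrix (Fin 2) (Fin 2) ℤ_[l]) with hA
  have hAe : A = !![A 0 0, A 0 1; A 1 0, A 1 1] := by
    ext i j; fin_cases i <;> fin_cases j <;> rfl
  have h1 : !![(l : ℚ_[l]), 0; 0, 1] *
      ((!![A 0 0, A 0 1; A 1 0, A 1 1] : Matrix (Fin 2) (Fin 2) ℤ_[l]).map (↑))
      * !![(l : ℚ_[l])⁻¹, 0; 0, 1]
      = (!![1, m₁; 0, 1] : Matrix (Fin 2) (Fin 2) ℤ_[l]).map (↑) := by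
    have := congrArg Units.val h
    rw [← hAe]
    exact this
  rw [map2 l Subtype.val, map2 l Subtype.val, Matrix.mul_fin_two, Matrix.mul_fin_two] at h1
  have e00 := congrFun (congrFun h1 0) 0
  have e01 := congrFun (congrFun h1 0) 1
  have e10 := congrFun (congrFun h1 1) 0
  have e11 := congrFun (congrFun h1 1) 1
  simp only [Matrix.cons_val', Matrix.cons_val_zero, Matrix.cons_val_one, Matrix.head_cons,
    Matrix.empty_val', Matrix.cons_val_fin_one, Matrix.head_fin_const,
    mul_zero, zero_mul, add_zero, zero_add, mul_one, one_mul] at e00 e01 e10 e11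
  refine ⟨A 0 1, ?_, ?_⟩
  · have : ((l : ℤ_[l]) * A 0 1 : ℚ_[l]) = (m₁ : ℚ_[l]) := by push_cast; exact e01
    exact (Subtype.coe_injective this).symm
  · apply Subtype.ext
    rw [← hA, hAe]
    have h00 : A 0 0 = 1 := by
      apply Subtype.coe_injective
      have heq : ((l : ℚ_[l]) * (A 0 0 : ℚ_[l])) * (l : ℚ_[l])⁻¹ = (A 0 0 : ℚ_[l]) := by
        field_simp
      rw [heq] at e00
      exact_mod_cast e00
    have h10 : A 1 0 = 0 := by
      apply Subtype.coe_injective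
      have heq : (A 1 0 : ℚ_[l]) = 0 := by
        simpa [hl] using e10
      exact_mod_cast heq
    have h11 : A 1 1 = 1 := by
      apply Subtype.coe_injective; exact_mod_cast e11
    rw [h00, h10, h11]
    rfl

lemma eq_zero_of_forall_pow_dvd (m : ℤ_[l]) (h : ∀ k : ℕ, (l : ℤ_[l]) ^ k ∣ m) :
    m = 0 := by
  by_contra hm
  have hpos : 0 < ‖m‖ := by simpa [norm_pos_iff] using hm
  have hl1 : (1 : ℝ) < l := by exact_mod_cast (Fact.out : l.Prime).one_lt
  have hinv : (l : ℝ)⁻¹ < 1 := inv_lt_one_of_one_lt₀ hl1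
  obtain ⟨k, hk⟩ := exists_pow_lt_of_lt_one hpos hinv
  obtain ⟨c, hc⟩ := h k
  have hle : ‖m‖ ≤ ((l : ℝ)⁻¹) ^ k := by
    rw [hc]
    calc ‖(l : ℤ_[l]) ^ k * c‖ = ‖(l : ℤ_[l])‖ ^ k * ‖c‖ := by
          rw [norm_mul, norm_pow]
      _ ≤ ‖(l : ℤ_[l])‖ ^ k * 1 :=
          mul_le_mul_of_nonneg_left (PadicInt.norm_le_one c) (by positivity)
      _ = ((l : ℝ)⁻¹) ^ k := by rw [mul_one, PadicInt.norm_p]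
  linarith

end Stmt16Aux

open Stmt16Aux in
/-- There is no finite-index subgroup `Γ' ⊆ Γ₀(l)` such that both `Γ'` and its conjugate
`g Γ' g⁻¹` (with `g = diag(l,1)`, the conjugate again consisting of `l`-integral matrices
of determinant one) are normal in `SL₂(ℤ_l)`. -/
theorem no_finite_index_subgroup_normal_under_both_embeddings :
    ¬ ∃ Γ' : Subgroup (Matrix.SpecialLinearGroup (Fin 2) ℤ_[l]),
        Γ' ≤ Gamma0Zl l ∧ Γ'.FiniteIndex ∧ Γ'.Normal ∧
        ∃ Γ'' : Subgroup (Matrix.SpecialLinearGroup (Fin 2) ℤ_[l]),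
          Γ''.Normal ∧
          Γ''.map (slZlToGlQl l) =
            (Γ'.map (slZlToGlQl l)).map (MulAut.conj (diagL l)).toMonoidHom := by
  rintro ⟨Γ', hsub, hfin, hnorm, Γ'', hnorm'', hmap⟩
  -- The descent step: if `U m ∈ Γ'` then `m = l² m₂` with `U m₂ ∈ Γ'`.
  have step : ∀ m : ℤ_[l], U l m ∈ Γ' →
      ∃ m₂, m = (l : ℤ_[l]) ^ 2 * m₂ ∧ U l m₂ ∈ Γ' := by
    intro m hU
    -- By normality, the lower unipotent `L (-m)` lies in `Γ'`.
    have hLm : L l (-m) ∈ Γ' := by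
      have := hnorm.conj_mem _ hU (w l)
      rwa [w_conj_U] at this
    -- Since `Γ' ≤ Γ₀(l)`, we get `l ∣ m`.
    have hdvd : (l : ℤ_[l]) ∣ m := by
      have h1 : (l : ℤ_[l]) ∣ ((L l (-m) : Matrix (Fin 2) (Fin 2) ℤ_[l]) 1 0) := hsub hLm
      have h2 : (l : ℤ_[l]) ∣ -m := by simpa [L] using h1
      exact dvd_neg.mp h2
    obtain ⟨m₁, hm₁⟩ := hdvd
    -- `L (-m₁) ∈ Γ''`, via the conjugation relation.
    have hL1 : L l (-m₁) ∈ Γ'' := by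
      have hmem : slZlToGlQl l (L l (-m₁)) ∈ Γ''.map (slZlToGlQl l) := by
        rw [hmap]
        refine ⟨slZlToGlQl l (L l ((l : ℤ_[l]) * (-m₁))),
          ⟨L l ((l : ℤ_[l]) * (-m₁)), ?_, rfl⟩, conj_phi_L l (-m₁)⟩
        have : (l : ℤ_[l]) * (-m₁) = -m := by rw [hm₁]; ring
        rw [this]; exact hLm
      obtain ⟨y, hy, hye⟩ := hmem
      rwa [phi_inj l hye] at hy
    -- By normality of `Γ''`, `U m₁ ∈ Γ''`.
    have hU1 : U l m₁ ∈ Γ'' := by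
      have := hnorm''.conj_mem _ hL1 (w l)
      rwa [w_conj_L, neg_neg] at this
    -- Transfer back through the conjugation and extract divisibility.
    have hmem2 : slZlToGlQl l (U l m₁) ∈
        (Γ'.map (slZlToGlQl l)).map (MulAut.conj (diagL l)).toMonoidHom := by
      rw [← hmap]
      exact ⟨U l m₁, hU1, rfl⟩
    obtain ⟨y, hy, hconj⟩ := hmem2
    obtain ⟨x, hx, rfl⟩ := hy
    obtain ⟨m₂, hm₂, hxU⟩ := extract l x m₁ hconj
    exact ⟨m₂, by rw [hm₁, hm₂]; ring, hxU ▸ hx⟩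
  -- `U N ∈ Γ'` for `N` the index of `Γ'`.
  set N := Γ'.index with hNdef
  have hN : U l (N : ℤ_[l]) ∈ Γ' := by
    rw [← U_pow]
    exact Subgroup.pow_index_mem Γ' (U l 1)
  -- Iterate the descent.
  have key : ∀ k : ℕ, ∃ m, (N : ℤ_[l]) = (l : ℤ_[l]) ^ (2 * k) * m ∧ U l m ∈ Γ' := by
    intro k
    induction k with
    | zero => exact ⟨(N : ℤ_[l]), by simp, hN⟩
    | succ k ih =>
      obtain ⟨m, hm, hUm⟩ := ih
      obtain ⟨m₂, hm₂, hUm₂⟩ := step m hUm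
      refine ⟨m₂, ?_, hUm₂⟩
      rw [hm, hm₂]
      ring
  have hdvdN : ∀ k : ℕ, (l : ℤ_[l]) ^ k ∣ (N : ℤ_[l]) := by
    intro k
    obtain ⟨m, hm, -⟩ := key k
    exact dvd_trans (pow_dvd_pow _ (by omega : k ≤ 2 * k)) ⟨m, hm⟩
  have hN0 : (N : ℤ_[l]) = 0 := eq_zero_of_forall_pow_dvd l _ hdvdN
  have : N = 0 := by exact_mod_cast hN0
  exact hfin.index_ne_zero this
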